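/- arXiv:1504.01086 — 4 statements merged into one kernel-verified Lean document; each statement's English description precedes it below -/
import Mathlib

section
/- In the virtual singular braid monoid VSB_n, for every 1 ≤ i ≤ n−2 one has the detour formulas σ_{i+1} = (v_i v_{i−1} ⋯ v₂ v₁)(v_{i+1} v_i ⋯ v₃ v₂) σ_1 (v₂ v₃ ⋯ v_i v_{i+1})(v₁ v₂ ⋯ v_{i−1} v_i) and σ_{i+1}⁻¹ = (v_i v_{i−1} ⋯ v₂ v₁)(v_{i+1} v_i ⋯ v₃ v₂) σ_1⁻¹ (v₂ v₃ ⋯ v_i v_{i+1})(v₁ v₂ ⋯ v_{i−1} v_i). -/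
namespace VSBpaper

/-- `ascV v a b = v a * v (a+1) * ⋯ * v b` (equal to `1` when `b < a`). -/
def ascV {M : Type*} [Monoid M] (v : ℕ → M) (a b : ℕ) : M :=
  ((List.range' a (b + 1 - a)).map v).prod

/-- `descV v a b = v b * v (b-1) * ⋯ * v a` (equal to `1` when `b < a`). -/
def descV {M : Type*} [Monoid M] (v : ℕ → M) (a b : ℕ) : M :=
  (((List.range' a (b + 1 - a)).map v).reverse).prod

/-- Generators of the virtual singular braid monoid on `n` strands:
`sig a` is `σ_{a+1}`, `sigInv a` is `σ_{a+1}⁻¹`, `tau a` is `τ_{a+1}`, `vir a` is `v_{a+1}`,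
so that generator indices automatically lie in `{1, …, n-1}`. -/
inductive VSBgen (n : ℕ) : Type
  | sig : Fin (n - 1) → VSBgen n
  | sigInv : Fin (n - 1) → VSBgen n
  | tau : Fin (n - 1) → VSBgen n
  | vir : Fin (n - 1) → VSBgen n

open FreeMonoid VSBgen in
/-- The defining relations of the virtual singular braid monoid `VSB n`. -/
inductive VSBrel (n : ℕ) : FreeMonoid (VSBgen n) → FreeMonoid (VSBgen n) → Prop
  /- σᵢ σᵢ⁻¹ = 1 -/
  | mul_inv (a : Fin (n - 1)) :
      VSBrel n (of (sig a) * of (sigInv a)) 1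
  /- σᵢ⁻¹ σᵢ = 1 -/
  | inv_mul (a : Fin (n - 1)) :
      VSBrel n (of (sigInv a) * of (sig a)) 1
  /- vᵢ² = 1 -/
  | v_sq (a : Fin (n - 1)) :
      VSBrel n (of (vir a) * of (vir a)) 1
  /- σᵢσⱼσᵢ = σⱼσᵢσⱼ for |i-j| = 1 -/
  | braid_sig (a b : Fin (n - 1)) (h : (a : ℕ) + 1 = b ∨ (b : ℕ) + 1 = a) :
      VSBrel n (of (sig a) * of (sig b) * of (sig a))
               (of (sig b) * of (sig a) * of (sig b))
  /- vᵢvⱼvᵢ = vⱼvᵢvⱼ for |i-j| = 1 -/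
  | braid_vir (a b : Fin (n - 1)) (h : (a : ℕ) + 1 = b ∨ (b : ℕ) + 1 = a) :
      VSBrel n (of (vir a) * of (vir b) * of (vir a))
               (of (vir b) * of (vir a) * of (vir b))
  /- vᵢσⱼvᵢ = vⱼσᵢvⱼ for |i-j| = 1 -/
  | vir_sig_vir (a b : Fin (n - 1)) (h : (a : ℕ) + 1 = b ∨ (b : ℕ) + 1 = a) :
      VSBrel n (of (vir a) * of (sig b) * of (vir a))
               (of (vir b) * of (sig a) * of (vir b))
  /- vᵢτⱼvᵢ = vⱼτᵢvⱼ for |i-j| = 1 -/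
  | vir_tau_vir (a b : Fin (n - 1)) (h : (a : ℕ) + 1 = b ∨ (b : ℕ) + 1 = a) :
      VSBrel n (of (vir a) * of (tau b) * of (vir a))
               (of (vir b) * of (tau a) * of (vir b))
  /- σᵢσⱼτᵢ = τⱼσᵢσⱼ for |i-j| = 1 -/
  | sig_sig_tau (a b : Fin (n - 1)) (h : (a : ℕ) + 1 = b ∨ (b : ℕ) + 1 = a) :
      VSBrel n (of (sig a) * of (sig b) * of (tau a))
               (of (tau b) * of (sig a) * of (sig b))
  /- σᵢτᵢ = τᵢσᵢ -/
  | sig_tau (a : Fin (n - 1)) :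
      VSBrel n (of (sig a) * of (tau a)) (of (tau a) * of (sig a))
  /- gᵢ hⱼ = hⱼ gᵢ for g, h ∈ {σ, σ⁻¹, τ, v} and |i-j| > 1 -/
  | far_comm (g h : Fin (n - 1) → VSBgen n)
      (hg : g = sig ∨ g = sigInv ∨ g = tau ∨ g = vir)
      (hh : h = sig ∨ h = sigInv ∨ h = tau ∨ h = vir)
      (a b : Fin (n - 1)) (hab : (a : ℕ) + 1 < b ∨ (b : ℕ) + 1 < a) :
      VSBrel n (of (g a) * of (h b)) (of (h b) * of (g a))

/-- The virtual singular braid monoid on `n` strands, presented by generators and relations. -/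
abbrev VSB (n : ℕ) := PresentedMonoid (VSBrel n)

/-- The real crossing `σ_k ∈ VSB n` (junk value `1` if `k ∉ {1, …, n-1}`). -/
def VSB.sigE (n : ℕ) (k : ℕ) : VSB n :=
  if h : 1 ≤ k ∧ k ≤ n - 1 then PresentedMonoid.of (VSBrel n) (VSBgen.sig ⟨k - 1, by omega⟩)
  else 1

/-- The inverse real crossing `σ_k⁻¹ ∈ VSB n` (junk value `1` if `k ∉ {1, …, n-1}`). -/
def VSB.sigInvE (n : ℕ) (k : ℕ) : VSB n :=
  if h : 1 ≤ k ∧ k ≤ n - 1 then PresentedMonoid.of (VSBrel n) (VSBgen.sigInv ⟨k - 1, by omega⟩)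
  else 1

/-- The singular crossing `τ_k ∈ VSB n` (junk value `1` if `k ∉ {1, …, n-1}`). -/
def VSB.tauE (n : ℕ) (k : ℕ) : VSB n :=
  if h : 1 ≤ k ∧ k ≤ n - 1 then PresentedMonoid.of (VSBrel n) (VSBgen.tau ⟨k - 1, by omega⟩)
  else 1

/-- The virtual crossing `v_k ∈ VSB n` (junk value `1` if `k ∉ {1, …, n-1}`). -/
def VSB.virE (n : ℕ) (k : ℕ) : VSB n :=
  if h : 1 ≤ k ∧ k ≤ n - 1 then PresentedMonoid.of (VSBrel n) (VSBgen.vir ⟨k - 1, by omega⟩)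
  else 1

section Aux

variable {M : Type*} [Monoid M]

lemma ascV_lt (v : ℕ → M) (a b : ℕ) (h : b < a) : ascV v a b = 1 := by
  unfold ascV
  have h0 : b + 1 - a = 0 := by omega
  simp [h0]

lemma descV_lt (v : ℕ → M) (a b : ℕ) (h : b < a) : descV v a b = 1 := by
  unfold descV
  have h0 : b + 1 - a = 0 := by omega
  simp [h0]

lemma ascV_succ (v : ℕ → M) (a b : ℕ) (h : a ≤ b + 1) :
    ascV v a (b + 1) = ascV v a b * v (b + 1) := by
  unfold ascV
  have h2 : b + 1 + 1 - a = (b + 1 - a) + 1 := by omega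
  have h3 : a + 1 * (b + 1 - a) = b + 1 := by omega
  rw [h2, List.range'_concat, h3]
  simp

lemma descV_succ (v : ℕ → M) (a b : ℕ) (h : a ≤ b + 1) :
    descV v a (b + 1) = v (b + 1) * descV v a b := by
  unfold descV
  have h2 : b + 1 + 1 - a = (b + 1 - a) + 1 := by omega
  have h3 : a + 1 * (b + 1 - a) = b + 1 := by omega
  rw [h2, List.range'_concat, h3]
  simp

lemma commute_descV (v : ℕ → M) (c : M) (a b : ℕ)
    (h : ∀ j, a ≤ j → j ≤ b → Commute c (v j)) : Commute c (descV v a b) := by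
  unfold descV
  refine Commute.list_prod_right _ _ fun x hx => ?_
  simp only [List.mem_reverse, List.mem_map, List.mem_range'] at hx
  obtain ⟨j, ⟨i, hi, rfl⟩, rfl⟩ := hx
  exact h _ (by omega) (by omega)

lemma commute_ascV (v : ℕ → M) (c : M) (a b : ℕ)
    (h : ∀ j, a ≤ j → j ≤ b → Commute c (v j)) : Commute c (ascV v a b) := by
  unfold ascV
  refine Commute.list_prod_right _ _ fun x hx => ?_
  simp only [List.mem_map, List.mem_range'] at hx
  obtain ⟨j, ⟨i, hi, rfl⟩, rfl⟩ := hx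
  exact h _ (by omega) (by omega)

end Aux

lemma VSB.sound {n : ℕ} {x y : FreeMonoid (VSBgen n)} (h : VSBrel n x y) :
    PresentedMonoid.mk (VSBrel n) x = PresentedMonoid.mk (VSBrel n) y :=
  Quotient.sound (ConGen.Rel.of x y h)

lemma VSB.sigE_eq (n k : ℕ) (h1 : 1 ≤ k) (h2 : k ≤ n - 1) :
    VSB.sigE n k = PresentedMonoid.mk (VSBrel n) (FreeMonoid.of (VSBgen.sig ⟨k - 1, by omega⟩)) :=
  dif_pos ⟨h1, h2⟩

lemma VSB.sigInvE_eq (n k : ℕ) (h1 : 1 ≤ k) (h2 : k ≤ n - 1) :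
    VSB.sigInvE n k =
      PresentedMonoid.mk (VSBrel n) (FreeMonoid.of (VSBgen.sigInv ⟨k - 1, by omega⟩)) :=
  dif_pos ⟨h1, h2⟩

lemma VSB.virE_eq (n k : ℕ) (h1 : 1 ≤ k) (h2 : k ≤ n - 1) :
    VSB.virE n k = PresentedMonoid.mk (VSBrel n) (FreeMonoid.of (VSBgen.vir ⟨k - 1, by omega⟩)) :=
  dif_pos ⟨h1, h2⟩

/-- **Detour formulas for the real crossings in `VSB n`.**
For every `1 ≤ i ≤ n-2`,
`σ_{i+1} = (v_i ⋯ v₂v₁)(v_{i+1} ⋯ v₃v₂) σ₁ (v₂v₃ ⋯ v_{i+1})(v₁v₂ ⋯ v_i)` and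
`σ_{i+1}⁻¹ = (v_i ⋯ v₂v₁)(v_{i+1} ⋯ v₃v₂) σ₁⁻¹ (v₂v₃ ⋯ v_{i+1})(v₁v₂ ⋯ v_i)`. -/
theorem VSB_detour_sig (n : ℕ) (hn : 2 ≤ n) :
    ∀ i : ℕ, 1 ≤ i → i ≤ n - 2 →
      VSB.sigE n (i + 1) =
        descV (VSB.virE n) 1 i * descV (VSB.virE n) 2 (i + 1) * VSB.sigE n 1 *
          ascV (VSB.virE n) 2 (i + 1) * ascV (VSB.virE n) 1 i ∧
      VSB.sigInvE n (i + 1) =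
        descV (VSB.virE n) 1 i * descV (VSB.virE n) 2 (i + 1) * VSB.sigInvE n 1 *
          ascV (VSB.virE n) 2 (i + 1) * ascV (VSB.virE n) 1 i := by
  suffices H : ∀ i : ℕ, i ≤ n - 2 →
      VSB.sigE n (i + 1) =
        descV (VSB.virE n) 1 i * descV (VSB.virE n) 2 (i + 1) * VSB.sigE n 1 *
          ascV (VSB.virE n) 2 (i + 1) * ascV (VSB.virE n) 1 i ∧
      VSB.sigInvE n (i + 1) =
        descV (VSB.virE n) 1 i * descV (VSB.virE n) 2 (i + 1) * VSB.sigInvE n 1 *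
          ascV (VSB.virE n) 2 (i + 1) * ascV (VSB.virE n) 1 i by
    exact fun i _ h2 => H i h2
  intro i
  induction i with
  | zero =>
    intro _
    rw [descV_lt _ 1 0 (by omega), descV_lt _ 2 1 (by omega), ascV_lt _ 2 1 (by omega),
      ascV_lt _ 1 0 (by omega)]
    constructor <;> simp
  | succ k ih =>
    intro hk
    obtain ⟨e1, e2⟩ := ih (by omega)
    have ha : k < n - 1 := by omega
    have hb : k + 1 < n - 1 := by omega
    set a : Fin (n - 1) := ⟨k, ha⟩ with ha_def
    set b : Fin (n - 1) := ⟨k + 1, hb⟩ with hb_def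
    set vA : VSB n := PresentedMonoid.mk (VSBrel n) (FreeMonoid.of (VSBgen.vir a)) with hvA
    set vB : VSB n := PresentedMonoid.mk (VSBrel n) (FreeMonoid.of (VSBgen.vir b)) with hvB
    set sA : VSB n := PresentedMonoid.mk (VSBrel n) (FreeMonoid.of (VSBgen.sig a)) with hsA
    set sB : VSB n := PresentedMonoid.mk (VSBrel n) (FreeMonoid.of (VSBgen.sig b)) with hsB
    set sA' : VSB n := PresentedMonoid.mk (VSBrel n) (FreeMonoid.of (VSBgen.sigInv a)) with hsA'
    set sB' : VSB n := PresentedMonoid.mk (VSBrel n) (FreeMonoid.of (VSBgen.sigInv b)) with hsB'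
    have hvva : vA * vA = 1 := by
      simpa [map_mul, hvA] using VSB.sound (VSBrel.v_sq a)
    have hvvb : vB * vB = 1 := by
      simpa [map_mul, hvB] using VSB.sound (VSBrel.v_sq b)
    have h1 : ∀ x : VSB n, vA * (vA * x) = x := fun x => by
      rw [← mul_assoc, hvva, one_mul]
    have h2 : ∀ x : VSB n, vB * (vB * x) = x := fun x => by
      rw [← mul_assoc, hvvb, one_mul]
    have hss : sA * sA' = 1 := by
      simpa [map_mul, hsA, hsA'] using VSB.sound (VSBrel.mul_inv a)
    have h3 : ∀ x : VSB n, sA * (sA' * x) = x := fun x => by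
      rw [← mul_assoc, hss, one_mul]
    have hs'sB : sB' * sB = 1 := by
      simpa [map_mul, hsB, hsB'] using VSB.sound (VSBrel.inv_mul b)
    have h4 : ∀ x : VSB n, sB' * (sB * x) = x := fun x => by
      rw [← mul_assoc, hs'sB, one_mul]
    have key : vA * (sB * vA) = vB * (sA * vB) := by
      simpa [map_mul, mul_assoc, hvA, hvB, hsA, hsB] using
        VSB.sound (VSBrel.vir_sig_vir a b (Or.inl rfl))
    have step1' : sB = vA * (vB * (sA * (vB * vA))) := by
      calc sB = vA * (vA * (sB * (vA * vA))) := by rw [hvva, mul_one, h1]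
        _ = vA * ((vA * (sB * vA)) * vA) := by simp only [mul_assoc]
        _ = vA * ((vB * (sA * vB)) * vA) := by rw [key]
        _ = vA * (vB * (sA * (vB * vA))) := by simp only [mul_assoc]
    have hX : sB * (vA * (vB * (sA' * (vB * vA)))) = 1 := by
      rw [step1']
      simp only [mul_assoc]
      rw [h1, h2, h3, h2, hvva]
    have step2' : sB' = vA * (vB * (sA' * (vB * vA))) := by
      calc sB' = sB' * (sB * (vA * (vB * (sA' * (vB * vA))))) := by rw [hX, mul_one]
        _ = vA * (vB * (sA' * (vB * vA))) := h4 _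
    have hva : VSB.virE n (k + 1) = vA := VSB.virE_eq n (k + 1) (by omega) (by omega)
    have hvb : VSB.virE n (k + 1 + 1) = vB := VSB.virE_eq n (k + 1 + 1) (by omega) (by omega)
    have hsa : VSB.sigE n (k + 1) = sA := VSB.sigE_eq n (k + 1) (by omega) (by omega)
    have hsb : VSB.sigE n (k + 1 + 1) = sB := VSB.sigE_eq n (k + 1 + 1) (by omega) (by omega)
    have hsa' : VSB.sigInvE n (k + 1) = sA' := VSB.sigInvE_eq n (k + 1) (by omega) (by omega)
    have hsb' : VSB.sigInvE n (k + 1 + 1) = sB' :=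
      VSB.sigInvE_eq n (k + 1 + 1) (by omega) (by omega)
    have hcomm : ∀ j, 1 ≤ j → j ≤ k → Commute vB (VSB.virE n j) := by
      intro j hj1 hj2
      have hjv : j - 1 < n - 1 := by omega
      rw [VSB.virE_eq n j hj1 (by omega)]
      have hfar := VSB.sound (VSBrel.far_comm (n := n) VSBgen.vir VSBgen.vir
        (Or.inr (Or.inr (Or.inr rfl))) (Or.inr (Or.inr (Or.inr rfl)))
        ⟨j - 1, hjv⟩ b (Or.inl (show j - 1 + 1 < k + 1 by omega)))
      have hfar' : PresentedMonoid.mk (VSBrel n) (FreeMonoid.of (VSBgen.vir ⟨j - 1, hjv⟩)) * vB =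
          vB * PresentedMonoid.mk (VSBrel n) (FreeMonoid.of (VSBgen.vir ⟨j - 1, hjv⟩)) := by
        simpa [map_mul, hvB] using hfar
      exact hfar'.symm
    have c1 : Commute vB (descV (VSB.virE n) 1 k) :=
      commute_descV _ _ _ _ fun j hj1 hj2 => hcomm j hj1 hj2
    have c2 : Commute vB (ascV (VSB.virE n) 1 k) :=
      commute_ascV _ _ _ _ fun j hj1 hj2 => hcomm j hj1 hj2
    have swap1 : ∀ x : VSB n, vB * (descV (VSB.virE n) 1 k * x) =
        descV (VSB.virE n) 1 k * (vB * x) := fun x => by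
      rw [← mul_assoc, c1.eq, mul_assoc]
    have swap2 : ∀ x : VSB n, ascV (VSB.virE n) 1 k * (vB * x) =
        vB * (ascV (VSB.virE n) 1 k * x) := fun x => by
      rw [← mul_assoc, ← c2.eq, mul_assoc]
    rw [descV_succ _ 1 k (by omega), descV_succ _ 2 (k + 1) (by omega),
      ascV_succ _ 2 (k + 1) (by omega), ascV_succ _ 1 k (by omega), hva, hvb, hsb, hsb']
    constructor
    · rw [step1', ← hsa, e1]
      simp only [mul_assoc]
      rw [swap1, swap2]
    · rw [step2', ← hsa', e2]
      simp only [mul_assoc]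
      rw [swap1, swap2]

end VSBpaper
end

section
/- The virtual singular braid monoid VSB_n is generated, as a monoid, by the set {σ_1, σ_1⁻¹, τ_1, v_1, …, v_{n−1}}; that is, the smallest submonoid of VSB_n containing σ_1, σ_1⁻¹, τ_1 and all v_i (1 ≤ i ≤ n−1) is all of VSB_n. -/
namespace VSBpaper

private lemma rel_eq {n : ℕ} {a b : FreeMonoid (VSBgen n)} (h : VSBrel n a b) :
    PresentedMonoid.mk (VSBrel n) a = PresentedMonoid.mk (VSBrel n) b :=
  Quotient.sound (ConGen.Rel.of _ _ h)

private lemma rel_eq' {n : ℕ} {a b : FreeMonoid (VSBgen n)} (h : VSBrel n a b)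
    {x y : VSB n} (ha : PresentedMonoid.mk (VSBrel n) a = x)
    (hb : PresentedMonoid.mk (VSBrel n) b = y) : x = y :=
  ha ▸ hb ▸ rel_eq h

private lemma canc {M : Type*} [Monoid M] {u v : M} (h : u * v = 1) (x : M) :
    u * (v * x) = x := by rw [← mul_assoc, h, one_mul]

open VSBgen PresentedMonoid in
private lemma step_mem {n : ℕ} (S : Submonoid (VSB n))
    (a b : Fin (n - 1)) (hab : (a : ℕ) + 1 = b)
    (hva : of (VSBrel n) (vir a) ∈ S) (hvb : of (VSBrel n) (vir b) ∈ S)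
    (hsa : of (VSBrel n) (sig a) ∈ S) (hsia : of (VSBrel n) (sigInv a) ∈ S)
    (hta : of (VSBrel n) (tau a) ∈ S) :
    of (VSBrel n) (sig b) ∈ S ∧ of (VSBrel n) (sigInv b) ∈ S ∧
      of (VSBrel n) (tau b) ∈ S := by
  set va := of (VSBrel n) (vir a) with hva'
  set vb := of (VSBrel n) (vir b) with hvb'
  set sa := of (VSBrel n) (sig a) with hsa'
  set sb := of (VSBrel n) (sig b) with hsb'
  set sia := of (VSBrel n) (sigInv a) with hsia'
  set sib := of (VSBrel n) (sigInv b) with hsib'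
  set ta := of (VSBrel n) (tau a) with hta'
  set tb := of (VSBrel n) (tau b) with htb'
  have vsqa : va * va = 1 := rel_eq' (VSBrel.v_sq a) (map_mul _ _ _) (map_one _)
  have vsqb : vb * vb = 1 := rel_eq' (VSBrel.v_sq b) (map_mul _ _ _) (map_one _)
  have minva : sa * sia = 1 := rel_eq' (VSBrel.mul_inv a) (map_mul _ _ _) (map_one _)
  have invmb : sib * sb = 1 := rel_eq' (VSBrel.inv_mul b) (map_mul _ _ _) (map_one _)
  have hvsv : va * sb * va = vb * sa * vb :=
    rel_eq' (VSBrel.vir_sig_vir a b (Or.inl hab))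
      (by rw [map_mul, map_mul]; rfl) (by rw [map_mul, map_mul]; rfl)
  have hvtv : va * tb * va = vb * ta * vb :=
    rel_eq' (VSBrel.vir_tau_vir a b (Or.inl hab))
      (by rw [map_mul, map_mul]; rfl) (by rw [map_mul, map_mul]; rfl)
  have keyS : sb = va * (vb * (sa * (vb * va))) := by
    calc sb = (va * va) * sb * (va * va) := by rw [vsqa, one_mul, mul_one]
      _ = va * (va * sb * va) * va := by simp only [mul_assoc]
      _ = va * (vb * sa * vb) * va := by rw [hvsv]
      _ = va * (vb * (sa * (vb * va))) := by simp only [mul_assoc]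
  have keyT : tb = va * (vb * (ta * (vb * va))) := by
    calc tb = (va * va) * tb * (va * va) := by rw [vsqa, one_mul, mul_one]
      _ = va * (va * tb * va) * va := by simp only [mul_assoc]
      _ = va * (vb * ta * vb) * va := by rw [hvtv]
      _ = va * (vb * (ta * (vb * va))) := by simp only [mul_assoc]
  refine ⟨?_, ?_, ?_⟩
  · rw [keyS]
    exact S.mul_mem hva (S.mul_mem hvb (S.mul_mem hsa (S.mul_mem hvb hva)))
  · -- σ_b⁻¹ = v_a v_b σ_a⁻¹ v_b v_a
    have hy : sb * (va * (vb * (sia * (vb * va)))) = 1 := by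
      rw [keyS]
      simp only [mul_assoc]
      rw [canc vsqa, canc vsqb, canc minva, canc vsqb, vsqa]
    have : sib = va * (vb * (sia * (vb * va))) := by
      calc sib = sib * (sb * (va * (vb * (sia * (vb * va))))) := by rw [hy, mul_one]
        _ = (sib * sb) * (va * (vb * (sia * (vb * va)))) := by rw [mul_assoc]
        _ = va * (vb * (sia * (vb * va))) := by rw [invmb, one_mul]
    rw [this]
    exact S.mul_mem hva (S.mul_mem hvb (S.mul_mem hsia (S.mul_mem hvb hva)))
  · rw [keyT]
    exact S.mul_mem hva (S.mul_mem hvb (S.mul_mem hta (S.mul_mem hvb hva)))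

/-- **`VSB n` is generated by `σ₁, σ₁⁻¹, τ₁` and the virtual crossings.**
The smallest submonoid of `VSB n` containing `σ₁`, `σ₁⁻¹`, `τ₁` and all `v_i`
for `1 ≤ i ≤ n-1` is the whole monoid. -/
theorem VSB_reduced_generating_set (n : ℕ) (hn : 2 ≤ n) :
    Submonoid.closure
      ({VSB.sigE n 1, VSB.sigInvE n 1, VSB.tauE n 1} ∪
        {x : VSB n | ∃ i : ℕ, 1 ≤ i ∧ i ≤ n - 1 ∧ x = VSB.virE n i}) = ⊤ := by
  open VSBgen PresentedMonoid in
  set S := Submonoid.closure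
      ({VSB.sigE n 1, VSB.sigInvE n 1, VSB.tauE n 1} ∪
        {x : VSB n | ∃ i : ℕ, 1 ≤ i ∧ i ≤ n - 1 ∧ x = VSB.virE n i}) with hS
  rw [eq_top_iff, ← PresentedMonoid.closure_range_of (VSBrel n), Submonoid.closure_le]
  -- each virtual generator is in S
  have hvir : ∀ a : Fin (n - 1), of (VSBrel n) (vir a) ∈ S := by
    intro a
    apply Submonoid.subset_closure
    refine Or.inr ⟨(a : ℕ) + 1, le_add_self, by omega, ?_⟩
    rw [VSB.virE, dif_pos ⟨le_add_self, by omega⟩]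
    congr 1
  -- main induction: all sig/sigInv/tau generators are in S
  have hmain : ∀ k : ℕ, ∀ hk : k < n - 1,
      of (VSBrel n) (sig ⟨k, hk⟩) ∈ S ∧ of (VSBrel n) (sigInv ⟨k, hk⟩) ∈ S ∧
        of (VSBrel n) (tau ⟨k, hk⟩) ∈ S := by
    intro k
    induction k with
    | zero =>
      intro hk
      have h1 : 1 ≤ 1 ∧ 1 ≤ n - 1 := ⟨le_refl 1, by omega⟩
      refine ⟨?_, ?_, ?_⟩
      · apply Submonoid.subset_closure
        refine Or.inl (Or.inl ?_)
        rw [VSB.sigE, dif_pos h1]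
      · apply Submonoid.subset_closure
        refine Or.inl (Or.inr (Or.inl ?_))
        rw [VSB.sigInvE, dif_pos h1]
      · apply Submonoid.subset_closure
        refine Or.inl (Or.inr (Or.inr ?_))
        rw [VSB.tauE, dif_pos h1]
        rfl
    | succ k ih =>
      intro hk
      have hk' : k < n - 1 := by omega
      obtain ⟨h1, h2, h3⟩ := ih hk'
      exact step_mem S ⟨k, hk'⟩ ⟨k + 1, hk⟩ rfl (hvir _) (hvir _) h1 h2 h3
  rintro x ⟨g, rfl⟩
  cases g with
  | sig a => exact (hmain a a.isLt).1
  | sigInv a => exact (hmain a a.isLt).2.1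
  | tau a => exact (hmain a a.isLt).2.2
  | vir a => exact hvir a

end VSBpaper
end

section
/- Under the stated hypotheses, for every index 1 ≤ i ≤ n−1, the relation τ_i σ_i = σ_i τ_i holds in M. -/
namespace VSBpaper

lemma prod_mul_rev_prod {M : Type*} [Monoid M] :
    ∀ l : List M, (∀ x ∈ l, x * x = 1) → l.prod * l.reverse.prod = 1 := by
  intro l
  induction l with
  | nil => simp
  | cons x t ih =>
    intro h
    have hx : x * x = 1 := h x (by simp)
    have ht : t.prod * t.reverse.prod = 1 := ih fun y hy => h y (by simp [hy])
    simp only [List.prod_cons, List.reverse_cons, List.prod_append, List.prod_cons,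
      List.prod_nil, mul_one]
    calc x * t.prod * (t.reverse.prod * x)
        = x * (t.prod * t.reverse.prod) * x := by
          rw [mul_assoc, mul_assoc, mul_assoc]
      _ = x * x := by rw [ht, mul_one]
      _ = 1 := hx

lemma asc_mul_desc {M : Type*} [Monoid M] (v : ℕ → M) (a b : ℕ)
    (h : ∀ j, a ≤ j → j ≤ b → v j * v j = 1) :
    ascV v a b * descV v a b = 1 := by
  unfold ascV descV
  apply prod_mul_rev_prod
  intro x hx
  rcases List.mem_map.mp hx with ⟨j, hj, rfl⟩
  rw [List.mem_range'_1] at hj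
  exact h j hj.1 (by omega)

/-- **Lemma 4.7.** For every `1 ≤ i ≤ n-1`, the relation `τ_i σ_i = σ_i τ_i` holds in `M`. -/
theorem tau_sigma_commute {M : Type*} [Monoid M] (n : ℕ) (hn : 2 ≤ n) (v : ℕ → M)
    (hvbraid : ∀ i j : ℕ, 1 ≤ i → i ≤ n - 1 → 1 ≤ j → j ≤ n - 1 → (i + 1 = j ∨ j + 1 = i) →
      v i * v j * v i = v j * v i * v j)
    (hvcomm : ∀ i j : ℕ, 1 ≤ i → i ≤ n - 1 → 1 ≤ j → j ≤ n - 1 → (i + 1 < j ∨ j + 1 < i) →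
      v i * v j = v j * v i)
    (hvsq : ∀ i : ℕ, 1 ≤ i → i ≤ n - 1 → v i * v i = 1)
    (σ σ' τ : M)
    (hcomm_στ : σ * τ = τ * σ)
    (hinv : σ * σ' = 1) (hinv' : σ' * σ = 1)
    (hτv : ∀ i : ℕ, 3 ≤ i → i ≤ n - 1 → τ * v i = v i * τ)
    (hσv : ∀ i : ℕ, 3 ≤ i → i ≤ n - 1 → σ * v i = v i * σ)
    (hbraid_base : 2 ≤ n - 1 →
      σ * (v 1 * v 2 * σ * v 2 * v 1) * σ =
        (v 1 * v 2 * σ * v 2 * v 1) * σ * (v 1 * v 2 * σ * v 2 * v 1))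
    (hmixed_base : 2 ≤ n - 1 →
      τ * (v 1 * v 2 * σ * v 2 * v 1) * σ =
        (v 1 * v 2 * σ * v 2 * v 1) * σ * (v 1 * v 2 * τ * v 2 * v 1))
    (hfar_σσ : 3 ≤ n - 1 →
      σ * (v 2 * v 3 * v 1 * v 2 * σ * v 2 * v 1 * v 3 * v 2) =
        (v 2 * v 3 * v 1 * v 2 * σ * v 2 * v 1 * v 3 * v 2) * σ)
    (hfar_τσ : 3 ≤ n - 1 →
      τ * (v 2 * v 3 * v 1 * v 2 * σ * v 2 * v 1 * v 3 * v 2) =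
        (v 2 * v 3 * v 1 * v 2 * σ * v 2 * v 1 * v 3 * v 2) * τ)
    (hfar_ττ : 3 ≤ n - 1 →
      τ * (v 2 * v 3 * v 1 * v 2 * τ * v 2 * v 1 * v 3 * v 2) =
        (v 2 * v 3 * v 1 * v 2 * τ * v 2 * v 1 * v 3 * v 2) * τ)
    (σs σs' τs : ℕ → M)
    (hσ1 : σs 1 = σ) (hσ'1 : σs' 1 = σ') (hτ1 : τs 1 = τ)
    (hσdef : ∀ i : ℕ, 1 ≤ i → i ≤ n - 2 →
      σs (i + 1) = descV v 1 i * descV v 2 (i + 1) * σ * ascV v 2 (i + 1) * ascV v 1 i)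
    (hσ'def : ∀ i : ℕ, 1 ≤ i → i ≤ n - 2 →
      σs' (i + 1) = descV v 1 i * descV v 2 (i + 1) * σ' * ascV v 2 (i + 1) * ascV v 1 i)
    (hτdef : ∀ i : ℕ, 1 ≤ i → i ≤ n - 2 →
      τs (i + 1) = descV v 1 i * descV v 2 (i + 1) * τ * ascV v 2 (i + 1) * ascV v 1 i) :
    ∀ i : ℕ, 1 ≤ i → i ≤ n - 1 → τs i * σs i = σs i * τs i := by
  intro i hi1 hi2
  match i, hi1 with
  | 1, _ => rw [hσ1, hτ1]; exact hcomm_στ.symm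
  | (k+2), _ =>
    have hk1 : 1 ≤ k + 1 := by omega
    have hk2 : k + 1 ≤ n - 2 := by omega
    rw [hσdef (k+1) hk1 hk2, hτdef (k+1) hk1 hk2]
    set A1 := descV v 1 (k+1)
    set A2 := descV v 2 (k+2)
    set B1 := ascV v 2 (k+2)
    set B2 := ascV v 1 (k+1)
    have h1 : B2 * A1 = 1 :=
      asc_mul_desc v 1 (k+1) fun j hj1 hj2 => hvsq j hj1 (by omega)
    have h2 : B1 * A2 = 1 :=
      asc_mul_desc v 2 (k+2) fun j hj1 hj2 => hvsq j (by omega) (by omega)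
    have key : ∀ x y : M, A1 * A2 * x * B1 * B2 * (A1 * A2 * y * B1 * B2)
        = A1 * A2 * (x * y) * B1 * B2 := by
      intro x y
      calc A1 * A2 * x * B1 * B2 * (A1 * A2 * y * B1 * B2)
          = A1 * (A2 * (x * (B1 * ((B2 * A1) * (A2 * (y * (B1 * B2))))))) := by
            simp only [mul_assoc]
        _ = A1 * (A2 * (x * ((B1 * A2) * (y * (B1 * B2))))) := by
            rw [h1, one_mul, ← mul_assoc B1 A2]
        _ = A1 * (A2 * (x * (y * (B1 * B2)))) := by rw [h2, one_mul]
        _ = A1 * A2 * (x * y) * B1 * B2 := by simp only [mul_assoc]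
    rw [key, key, hcomm_στ]

end VSBpaper
end

section
/- Under the stated hypotheses, for all indices i, j with 1 ≤ i, i+2 ≤ j ≤ n−1, the following identity holds in M: 1 = (v_{i−1} ⋯ v₂v₁)(v_i ⋯ v₃v₂)(v_{j−1} ⋯ v₄v₃)(v_j ⋯ v₅v₄)(v₂v₃ ⋯ v_{i+2})(v₁v₂ ⋯ v_{i+1})(v₂v₃ ⋯ v_j)(v₁v₂ ⋯ v_{j−1}), where a product over an empty range of indices is interpreted as 1. -/
namespace VSBpaper

section Aux

variable {M : Type*} [Monoid M] (v : ℕ → M)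

private lemma mul_left_congr (p : M) {x y : M} (h : x = y) : p * x = p * y := by rw [h]

private lemma cof {p q r s : M} (h : p * q = r * s) (x : M) : p * (q * x) = r * (s * x) := by
  rw [← mul_assoc, h, mul_assoc]

private lemma split_cof {p q r : M} (h : p = q * r) (x : M) : p * x = q * (r * x) := by
  rw [h, mul_assoc]

private lemma cancel_cof {p q : M} (h : p * q = 1) (x : M) : p * (q * x) = x := by
  rw [← mul_assoc, h, one_mul]

private lemma prod_comm_right (w : M) :
    ∀ l : List ℕ, (∀ x ∈ l, v x * w = w * v x) →
      (l.map v).prod * w = w * (l.map v).prod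
  | [], _ => by simp
  | x :: t, h => by
    have ih := prod_comm_right w t (fun y hy => h y (List.mem_cons_of_mem _ hy))
    have hx := h x (List.mem_cons_self)
    simp only [List.map_cons, List.prod_cons]
    rw [mul_assoc, ih, ← mul_assoc, hx, mul_assoc]

private lemma rev_prod_cancel :
    ∀ l : List ℕ, (∀ x ∈ l, v x * v x = 1) →
      ((l.map v).reverse).prod * (l.map v).prod = 1
  | [], _ => by simp
  | x :: t, h => by
    have ih := rev_prod_cancel t (fun y hy => h y (List.mem_cons_of_mem _ hy))
    have hx := h x (List.mem_cons_self)
    simp only [List.map_cons, List.reverse_cons, List.prod_append, List.prod_cons,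
      List.prod_nil, mul_one]
    rw [mul_assoc, ← mul_assoc (v x) (v x), hx, one_mul, ih]

lemma ascV_of_lt {a b : ℕ} (h : b < a) : ascV v a b = 1 := by
  unfold ascV
  rw [show b + 1 - a = 0 from by omega]
  simp

lemma ascV_single (a : ℕ) : ascV v a a = v a := by
  unfold ascV
  rw [show a + 1 - a = 1 from by omega]
  simp [List.range']

lemma ascV_concat (a b c : ℕ) (h1 : a ≤ b + 1) (h2 : b ≤ c) :
    ascV v a c = ascV v a b * ascV v (b + 1) c := by
  unfold ascV
  rw [← List.prod_append, ← List.map_append]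
  congr 1
  rw [show c + 1 - (b + 1) = c - b from by omega,
    show c + 1 - a = (b + 1 - a) + (c - b) from by omega,
    ← List.range'_append (s := a) (m := b + 1 - a) (n := c - b) (step := 1),
    show a + 1 * (b + 1 - a) = b + 1 from by omega]

lemma ascV_cons {a b : ℕ} (h : a ≤ b) : ascV v a b = v a * ascV v (a + 1) b := by
  rw [ascV_concat v a a b (by omega) h, ascV_single]

lemma ascV_snoc {a b : ℕ} (h : a ≤ b + 1) : ascV v a (b + 1) = ascV v a b * v (b + 1) := by
  rw [ascV_concat v a b (b + 1) h (by omega), ascV_single]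

lemma ascV_split (a b c : ℕ) (h0 : 1 ≤ b) (h1 : a ≤ b) (h2 : b ≤ c + 1) :
    ascV v a c = ascV v a (b - 1) * ascV v b c := by
  have h := ascV_concat v a (b - 1) c (by omega) (by omega)
  rwa [show b - 1 + 1 = b from by omega] at h

lemma descV_mul_ascV {a b : ℕ} (h : ∀ k, a ≤ k → k ≤ b → v k * v k = 1) :
    descV v a b * ascV v a b = 1 := by
  unfold descV ascV
  refine rev_prod_cancel v _ (fun x hx => ?_)
  rw [List.mem_range'_1] at hx
  exact h x hx.1 (by omega)

end Aux

section Rel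

variable {M : Type*} [Monoid M] (n : ℕ) (v : ℕ → M)

private lemma ascV_mul_v
    (hvcomm : ∀ i j : ℕ, 1 ≤ i → i ≤ n - 1 → 1 ≤ j → j ≤ n - 1 → (i + 1 < j ∨ j + 1 < i) →
      v i * v j = v j * v i)
    (a b m : ℕ) (ha : 1 ≤ a) (hb : b ≤ n - 1) (hm1 : 1 ≤ m) (hm2 : m ≤ n - 1)
    (hfar : b + 1 < m ∨ m + 1 < a) :
    ascV v a b * v m = v m * ascV v a b := by
  unfold ascV
  refine prod_comm_right v (v m) _ (fun x hx => ?_)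
  rw [List.mem_range'_1] at hx
  exact hvcomm x m (by omega) (by omega) hm1 hm2 (by omega)

private lemma ascV_comm
    (hvcomm : ∀ i j : ℕ, 1 ≤ i → i ≤ n - 1 → 1 ≤ j → j ≤ n - 1 → (i + 1 < j ∨ j + 1 < i) →
      v i * v j = v j * v i)
    (a b c d : ℕ) (ha : 1 ≤ a) (hb : b ≤ n - 1) (hc : 1 ≤ c) (hd : d ≤ n - 1)
    (hfar : b + 1 < c) :
    ascV v a b * ascV v c d = ascV v c d * ascV v a b := by
  unfold ascV
  refine prod_comm_right v _ _ (fun x hx => ?_)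
  rw [List.mem_range'_1] at hx
  exact (ascV_mul_v n v hvcomm c d x hc hd (by omega) (by omega) (by omega)).symm

private lemma ascV_step
    (hvbraid : ∀ i j : ℕ, 1 ≤ i → i ≤ n - 1 → 1 ≤ j → j ≤ n - 1 → (i + 1 = j ∨ j + 1 = i) →
      v i * v j * v i = v j * v i * v j)
    (hvcomm : ∀ i j : ℕ, 1 ≤ i → i ≤ n - 1 → 1 ≤ j → j ≤ n - 1 → (i + 1 < j ∨ j + 1 < i) →
      v i * v j = v j * v i)
    (a b m : ℕ) (ha : 1 ≤ a) (hb : b ≤ n - 1) (ham : a ≤ m) (hmb : m + 1 ≤ b) :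
    ascV v a b * v m = v (m + 1) * ascV v a b := by
  have hm1 : 1 ≤ m := ha.trans ham
  have hcomm1 : ascV v (m + 1 + 1) b * v m = v m * ascV v (m + 1 + 1) b :=
    ascV_mul_v n v hvcomm _ _ _ (by omega) hb hm1 (by omega) (by omega)
  have hcomm2 : ascV v a (m - 1) * v (m + 1) = v (m + 1) * ascV v a (m - 1) :=
    ascV_mul_v n v hvcomm _ _ _ ha (by omega) (by omega) (by omega) (by omega)
  have hbr : v m * v (m + 1) * v m = v (m + 1) * v m * v (m + 1) :=
    hvbraid m (m + 1) hm1 (by omega) (by omega) (by omega) (Or.inl rfl)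
  rw [ascV_split v a m b hm1 ham (by omega), ascV_cons v (show m ≤ b by omega),
    ascV_cons v (show m + 1 ≤ b by omega)]
  simp only [mul_assoc]
  rw [hcomm1]
  have hbr' : v m * (v (m + 1) * (v m * ascV v (m + 1 + 1) b)) =
      v (m + 1) * (v m * (v (m + 1) * ascV v (m + 1 + 1) b)) := by
    simp only [← mul_assoc]
    rw [hbr]
  rw [hbr', ← mul_assoc, hcomm2, mul_assoc]

private lemma ascV_shift
    (hvbraid : ∀ i j : ℕ, 1 ≤ i → i ≤ n - 1 → 1 ≤ j → j ≤ n - 1 → (i + 1 = j ∨ j + 1 = i) →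
      v i * v j * v i = v j * v i * v j)
    (hvcomm : ∀ i j : ℕ, 1 ≤ i → i ≤ n - 1 → 1 ≤ j → j ≤ n - 1 → (i + 1 < j ∨ j + 1 < i) →
      v i * v j = v j * v i)
    (a b : ℕ) (ha : 1 ≤ a) (hb : b ≤ n - 1) :
    ∀ k c d : ℕ, d + 1 = c + k → a ≤ c → d + 1 ≤ b →
      ascV v a b * ascV v c d = ascV v (c + 1) (d + 1) * ascV v a b := by
  intro k
  induction k with
  | zero =>
    intro c d h1 h2 h3
    rw [ascV_of_lt v (show d < c by omega), ascV_of_lt v (show d + 1 < c + 1 by omega),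
      mul_one, one_mul]
  | succ k ih =>
    intro c d h1 h2 h3
    have hcd : c ≤ d := by omega
    rw [ascV_cons v hcd, ascV_cons v (show c + 1 ≤ d + 1 by omega), ← mul_assoc,
      ascV_step n v hvbraid hvcomm a b c ha hb h2 (by omega), mul_assoc,
      ih (c + 1) d (by omega) (by omega) h3, ← mul_assoc]

private lemma ascV_glue
    (hvsq : ∀ i : ℕ, 1 ≤ i → i ≤ n - 1 → v i * v i = 1)
    (a b c : ℕ) (h1 : a ≤ b + 1) (h2 : b + 1 ≤ c) (hbn : b + 1 ≤ n - 1) :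
    ascV v a (b + 1) * ascV v (b + 1) c = ascV v a b * ascV v (b + 2) c := by
  rw [ascV_snoc v h1, ascV_cons v h2]
  simp only [mul_assoc]
  rw [← mul_assoc (v (b + 1)) (v (b + 1)), hvsq (b + 1) (by omega) hbn, one_mul]

end Rel

/-- **The identity `1 = (v_{i-1}⋯v₁)(v_i⋯v₂)(v_{j-1}⋯v₃)(v_j⋯v₄)(v₂⋯v_{i+2})(v₁⋯v_{i+1})(v₂⋯v_j)(v₁⋯v_{j-1})`**
holding in any monoid `M` whose elements `v 1, …, v (n-1)` satisfy the braid,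
far-commutation, and involution relations, for all indices `1 ≤ i`, `i+2 ≤ j ≤ n-1`.
(A product over an empty range of indices is `1`.) -/
theorem v_one_identity {M : Type*} [Monoid M] (n : ℕ) (hn : 2 ≤ n) (v : ℕ → M)
    (hvbraid : ∀ i j : ℕ, 1 ≤ i → i ≤ n - 1 → 1 ≤ j → j ≤ n - 1 → (i + 1 = j ∨ j + 1 = i) →
      v i * v j * v i = v j * v i * v j)
    (hvcomm : ∀ i j : ℕ, 1 ≤ i → i ≤ n - 1 → 1 ≤ j → j ≤ n - 1 → (i + 1 < j ∨ j + 1 < i) →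
      v i * v j = v j * v i)
    (hvsq : ∀ i : ℕ, 1 ≤ i → i ≤ n - 1 → v i * v i = 1) :
    ∀ i j : ℕ, 1 ≤ i → i + 2 ≤ j → j ≤ n - 1 →
      (1 : M) =
        descV v 1 (i - 1) * descV v 2 i * descV v 3 (j - 1) * descV v 4 j *
          ascV v 2 (i + 2) * ascV v 1 (i + 1) * ascV v 2 j * ascV v 1 (j - 1) := by
  intro i j hi hij hjn
  -- abbreviations for the hypotheses of the auxiliary lemmas
  have shift := ascV_shift n v hvbraid hvcomm
  have glue := ascV_glue n v hvsq
  have comm := ascV_comm n v hvcomm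
  -- Step 2 : A(1,i+1) A(2,i) = A(3,i+1) A(1,i+1)
  have s2 : ascV v 1 (i + 1) * ascV v 2 i = ascV v 3 (i + 1) * ascV v 1 (i + 1) :=
    shift 1 (i + 1) (by omega) (by omega) (i - 1) 2 i (by omega) (by omega) (by omega)
  -- Step 3 : A(2,i+2) A(3,i+1) = A(4,i+2) A(2,i+2)
  have s3 : ascV v 2 (i + 2) * ascV v 3 (i + 1) = ascV v 4 (i + 2) * ascV v 2 (i + 2) :=
    shift 2 (i + 2) (by omega) (by omega) (i - 1) 3 (i + 1) (by omega) (by omega) (by omega)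
  -- Step 4 : A(1,i+1) A(i+1,j) = A(1,i) A(i+2,j)
  have s4 : ascV v 1 (i + 1) * ascV v (i + 1) j = ascV v 1 i * ascV v (i + 2) j :=
    glue 1 i j (by omega) (by omega) (by omega)
  -- Step 5 : A(1,i) and A(i+2,j) commute
  have s5 : ascV v 1 i * ascV v (i + 2) j = ascV v (i + 2) j * ascV v 1 i :=
    comm 1 i (i + 2) j (by omega) (by omega) (by omega) (by omega) (by omega)
  -- Step 6 : A(2,i+2) A(i+2,j) = A(2,i+1) A(i+3,j)
  have s6 : ascV v 2 (i + 2) * ascV v (i + 2) j = ascV v 2 (i + 1) * ascV v (i + 3) j :=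
    glue 2 (i + 1) j (by omega) (by omega) (by omega)
  -- Step 7 : A(2,i+1) and A(i+3,j) commute
  have s7 : ascV v 2 (i + 1) * ascV v (i + 3) j = ascV v (i + 3) j * ascV v 2 (i + 1) :=
    comm 2 (i + 1) (i + 3) j (by omega) (by omega) (by omega) (by omega) (by omega)
  -- Step 8 : A(4,j) = A(4,i+2) A(i+3,j)
  have s8 : ascV v 4 j = ascV v 4 (i + 2) * ascV v (i + 3) j :=
    ascV_concat v 4 (i + 2) j (by omega) (by omega)
  -- Step 1 : A(2,j) = A(2,i) A(i+1,j)
  have s1 : ascV v 2 j = ascV v 2 i * ascV v (i + 1) j :=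
    ascV_concat v 2 i j (by omega) (by omega)
  -- Step 9 : A(1,j-1) = A(1,i-1) A(i,j-1)
  have s9 : ascV v 1 (j - 1) = ascV v 1 (i - 1) * ascV v i (j - 1) :=
    ascV_split v 1 i (j - 1) (by omega) (by omega) (by omega)
  -- Step 10 : A(1,i) A(1,i-1) = A(2,i) A(1,i)
  have s10 : ascV v 1 i * ascV v 1 (i - 1) = ascV v 2 i * ascV v 1 i := by
    have h := shift 1 i (by omega) (by omega) (i - 1) 1 (i - 1) (by omega) (by omega) (by omega)
    rwa [show i - 1 + 1 = i from by omega] at h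
  -- Step 11 : A(2,i+1) A(2,i) = A(3,i+1) A(2,i+1)
  have s11 : ascV v 2 (i + 1) * ascV v 2 i = ascV v 3 (i + 1) * ascV v 2 (i + 1) :=
    shift 2 (i + 1) (by omega) (by omega) (i - 1) 2 i (by omega) (by omega) (by omega)
  -- Step 12 : A(1,i) A(i,j-1) = A(1,i-1) A(i+1,j-1)
  have s12 : ascV v 1 i * ascV v i (j - 1) = ascV v 1 (i - 1) * ascV v (i + 1) (j - 1) := by
    have h := glue 1 (i - 1) (j - 1) (by omega) (by omega) (by omega)
    rwa [show i - 1 + 1 = i from by omega, show i - 1 + 2 = i + 1 from by omega] at h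
  -- Step 13 : A(1,i-1) and A(i+1,j-1) commute
  have s13 : ascV v 1 (i - 1) * ascV v (i + 1) (j - 1) =
      ascV v (i + 1) (j - 1) * ascV v 1 (i - 1) :=
    comm 1 (i - 1) (i + 1) (j - 1) (by omega) (by omega) (by omega) (by omega) (by omega)
  -- Step 14 : A(2,i+1) A(i+1,j-1) = A(2,i) A(i+2,j-1)
  have s14 : ascV v 2 (i + 1) * ascV v (i + 1) (j - 1) =
      ascV v 2 i * ascV v (i + 2) (j - 1) :=
    glue 2 i (j - 1) (by omega) (by omega) (by omega)
  -- Step 15 : A(2,i) and A(i+2,j-1) commute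
  have s15 : ascV v 2 i * ascV v (i + 2) (j - 1) = ascV v (i + 2) (j - 1) * ascV v 2 i :=
    comm 2 i (i + 2) (j - 1) (by omega) (by omega) (by omega) (by omega) (by omega)
  -- Step 16 : A(3,j-1) = A(3,i+1) A(i+2,j-1)
  have s16 : ascV v 3 (j - 1) = ascV v 3 (i + 1) * ascV v (i + 2) (j - 1) :=
    ascV_concat v 3 (i + 1) (j - 1) (by omega) (by omega)
  -- the key word identity
  have key : ascV v 2 (i + 2) * (ascV v 1 (i + 1) * (ascV v 2 j * ascV v 1 (j - 1))) =
      ascV v 4 j * (ascV v 3 (j - 1) * (ascV v 2 i * ascV v 1 (i - 1))) :=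
    calc
      ascV v 2 (i + 2) * (ascV v 1 (i + 1) * (ascV v 2 j * ascV v 1 (j - 1)))
          = ascV v 2 (i + 2) * (ascV v 1 (i + 1) *
              (ascV v 2 i * (ascV v (i + 1) j * ascV v 1 (j - 1)))) :=
        mul_left_congr _ (mul_left_congr _ (split_cof s1 _))
      _ = ascV v 2 (i + 2) * (ascV v 3 (i + 1) *
              (ascV v 1 (i + 1) * (ascV v (i + 1) j * ascV v 1 (j - 1)))) :=
        mul_left_congr _ (cof s2 _)
      _ = ascV v 4 (i + 2) * (ascV v 2 (i + 2) *
              (ascV v 1 (i + 1) * (ascV v (i + 1) j * ascV v 1 (j - 1)))) :=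
        cof s3 _
      _ = ascV v 4 (i + 2) * (ascV v 2 (i + 2) *
              (ascV v 1 i * (ascV v (i + 2) j * ascV v 1 (j - 1)))) :=
        mul_left_congr _ (mul_left_congr _ (cof s4 _))
      _ = ascV v 4 (i + 2) * (ascV v 2 (i + 2) *
              (ascV v (i + 2) j * (ascV v 1 i * ascV v 1 (j - 1)))) :=
        mul_left_congr _ (mul_left_congr _ (cof s5 _))
      _ = ascV v 4 (i + 2) * (ascV v 2 (i + 1) *
              (ascV v (i + 3) j * (ascV v 1 i * ascV v 1 (j - 1)))) :=
        mul_left_congr _ (cof s6 _)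
      _ = ascV v 4 (i + 2) * (ascV v (i + 3) j *
              (ascV v 2 (i + 1) * (ascV v 1 i * ascV v 1 (j - 1)))) :=
        mul_left_congr _ (cof s7 _)
      _ = ascV v 4 j * (ascV v 2 (i + 1) * (ascV v 1 i * ascV v 1 (j - 1))) :=
        (split_cof s8 _).symm
      _ = ascV v 4 j * (ascV v 2 (i + 1) *
              (ascV v 1 i * (ascV v 1 (i - 1) * ascV v i (j - 1)))) :=
        mul_left_congr _ (mul_left_congr _ (mul_left_congr _ s9))
      _ = ascV v 4 j * (ascV v 2 (i + 1) *
              (ascV v 2 i * (ascV v 1 i * ascV v i (j - 1)))) :=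
        mul_left_congr _ (mul_left_congr _ (cof s10 _))
      _ = ascV v 4 j * (ascV v 3 (i + 1) *
              (ascV v 2 (i + 1) * (ascV v 1 i * ascV v i (j - 1)))) :=
        mul_left_congr _ (cof s11 _)
      _ = ascV v 4 j * (ascV v 3 (i + 1) *
              (ascV v 2 (i + 1) * (ascV v 1 (i - 1) * ascV v (i + 1) (j - 1)))) :=
        mul_left_congr _ (mul_left_congr _ (mul_left_congr _ s12))
      _ = ascV v 4 j * (ascV v 3 (i + 1) *
              (ascV v 2 (i + 1) * (ascV v (i + 1) (j - 1) * ascV v 1 (i - 1)))) :=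
        mul_left_congr _ (mul_left_congr _ (mul_left_congr _ s13))
      _ = ascV v 4 j * (ascV v 3 (i + 1) *
              (ascV v 2 i * (ascV v (i + 2) (j - 1) * ascV v 1 (i - 1)))) :=
        mul_left_congr _ (mul_left_congr _ (cof s14 _))
      _ = ascV v 4 j * (ascV v 3 (i + 1) *
              (ascV v (i + 2) (j - 1) * (ascV v 2 i * ascV v 1 (i - 1)))) :=
        mul_left_congr _ (mul_left_congr _ (cof s15 _))
      _ = ascV v 4 j * (ascV v 3 (j - 1) * (ascV v 2 i * ascV v 1 (i - 1))) :=
        mul_left_congr _ (split_cof s16 _).symm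
  -- the cancellation facts
  have c1 : descV v 1 (i - 1) * ascV v 1 (i - 1) = 1 :=
    descV_mul_ascV v (fun k hk1 hk2 => hvsq k (by omega) (by omega))
  have c2 : descV v 2 i * ascV v 2 i = 1 :=
    descV_mul_ascV v (fun k hk1 hk2 => hvsq k (by omega) (by omega))
  have c3 : descV v 3 (j - 1) * ascV v 3 (j - 1) = 1 :=
    descV_mul_ascV v (fun k hk1 hk2 => hvsq k (by omega) (by omega))
  have c4 : descV v 4 j * ascV v 4 j = 1 :=
    descV_mul_ascV v (fun k hk1 hk2 => hvsq k (by omega) (by omega))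
  simp only [mul_assoc]
  rw [key, cancel_cof c4, cancel_cof c3, cancel_cof c2]
  exact c1.symm

end VSBpaper
end
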